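/- Let p be an odd prime. Then ∑_{a=1}^{p−1} q_p(a) ≡ W_p (mod p), as a congruence of integers. -/

import Mathlib

open Finset

/-- `x ≡ y (mod p^k)` for rationals: `x - y = p^k * (c/d)` with `p ∤ d`. -/
def ratCongr (p k : ℕ) (x y : ℚ) : Prop :=
  ∃ c d : ℤ, ¬ (p : ℤ) ∣ d ∧ x - y = (p : ℚ) ^ k * ((c : ℚ) / (d : ℚ))

/-- The Wilson quotient `W_p = ((p-1)! + 1)/p` (an integer by Wilson's theorem). -/
def wilsonQuotient (p : ℕ) : ℤ := ((Nat.factorial (p - 1) : ℤ) + 1) / p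

/-- The Fermat quotient `q_p(a) = (a^(p-1) - 1)/p` (an integer for `p ∤ a`). -/
def fermatQuotient (p a : ℕ) : ℤ := ((a : ℤ) ^ (p - 1) - 1) / p

/-- A prime `p` is a Wilson prime if `p ∣ W_p`. -/
def IsWilsonPrime (p : ℕ) : Prop := (p : ℤ) ∣ wilsonQuotient p

/-- A prime `p` is a Lerch prime if `∑_{a=1}^{p-1} q_p(a) ≡ W_p (mod p²)`. -/
def IsLerchPrime (p : ℕ) : Prop :=
  (p : ℤ) ^ 2 ∣ (∑ a ∈ Icc 1 (p - 1), fermatQuotient p a) - wilsonQuotient p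

/-- The harmonic number `H_a = ∑_{k=1}^{a} 1/k`. -/
def harmonicNum (a : ℕ) : ℚ := ∑ k ∈ Icc 1 a, (1 : ℚ) / k

/-- The generalized harmonic number `H_{a,2} = ∑_{k=1}^{a} 1/k²`. -/
def harmonicNum2 (a : ℕ) : ℚ := ∑ k ∈ Icc 1 a, (1 : ℚ) / (k : ℚ) ^ 2

lemma prod_one_add_congr (t : ℤ) (s : Finset ℕ) (f : ℕ → ℤ) :
    (∏ a ∈ s, (1 + t * f a)) ≡ 1 + t * ∑ a ∈ s, f a [ZMOD t ^ 2] := by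
  classical
  induction s using Finset.induction_on with
  | empty => simp
  | @insert a s ha ih =>
    rw [Finset.prod_insert ha, Finset.sum_insert ha]
    calc (1 + t * f a) * ∏ x ∈ s, (1 + t * f x)
        ≡ (1 + t * f a) * (1 + t * ∑ x ∈ s, f x) [ZMOD t ^ 2] := ih.mul_left _
      _ ≡ 1 + t * (f a + ∑ x ∈ s, f x) [ZMOD t ^ 2] :=
          Int.modEq_iff_dvd.mpr ⟨-(f a * ∑ x ∈ s, f x), by ring⟩

lemma pow_sub_one_congr (x : ℤ) (n : ℕ) :
    (x - 1) ^ n ≡ (-1) ^ n * (1 - n * x) [ZMOD x ^ 2] := by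
  induction n with
  | zero => simp
  | succ n ih =>
    calc (x - 1) ^ (n + 1) = (x - 1) ^ n * (x - 1) := by ring
      _ ≡ (-1) ^ n * (1 - n * x) * (x - 1) [ZMOD x ^ 2] := ih.mul_right _
      _ ≡ (-1) ^ (n + 1) * (1 - (n + 1) * x) [ZMOD x ^ 2] :=
          Int.modEq_iff_dvd.mpr ⟨(-1) ^ n * n, by push_cast; ring⟩

theorem stmt_6 (p : ℕ) (hp : p.Prime) (hodd : Odd p) :
    (p : ℤ) ∣ (∑ a ∈ Icc 1 (p - 1), fermatQuotient p a) - wilsonQuotient p := by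
  haveI : Fact p.Prime := ⟨hp⟩
  have hp0 : (p : ℤ) ≠ 0 := Int.natCast_ne_zero.mpr hp.pos.ne'
  set W := wilsonQuotient p with hWdef
  set S := ∑ a ∈ Icc 1 (p - 1), fermatQuotient p a with hSdef
  -- Wilson exactness
  have hWd : (p : ℤ) ∣ ((p - 1).factorial : ℤ) + 1 := by
    have h := ZMod.wilsons_lemma p
    have : ((((p - 1).factorial : ℤ) + 1 : ℤ) : ZMod p) = 0 := by
      push_cast
      rw [h]; ring
    exact (ZMod.intCast_zmod_eq_zero_iff_dvd _ p).mp this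
  have hW : (p : ℤ) * W = ((p - 1).factorial : ℤ) + 1 := Int.mul_ediv_cancel' hWd
  -- Fermat exactness
  have hq : ∀ a ∈ Icc 1 (p - 1), (p : ℤ) * fermatQuotient p a = (a : ℤ) ^ (p - 1) - 1 := by
    intro a ha
    rw [mem_Icc] at ha
    have hpa : ¬ p ∣ a := by
      intro hd
      have := Nat.le_of_dvd (by omega) hd
      omega
    have ha0 : (a : ZMod p) ≠ 0 := fun h => hpa ((ZMod.natCast_eq_zero_iff a p).mp h)
    have hfer : (a : ZMod p) ^ (p - 1) = 1 := ZMod.pow_card_sub_one_eq_one ha0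
    have hdvd : (p : ℤ) ∣ (a : ℤ) ^ (p - 1) - 1 := by
      apply (ZMod.intCast_zmod_eq_zero_iff_dvd _ p).mp
      push_cast
      rw [hfer]; ring
    exact Int.mul_ediv_cancel' hdvd
  -- the product identity
  have h1 : (∏ a ∈ Icc 1 (p - 1), (1 + (p : ℤ) * fermatQuotient p a))
      ≡ 1 + (p : ℤ) * S [ZMOD (p : ℤ) ^ 2] := prod_one_add_congr _ _ _
  have h2 : (∏ a ∈ Icc 1 (p - 1), (1 + (p : ℤ) * fermatQuotient p a))
      = ((p - 1).factorial : ℤ) ^ (p - 1) := by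
    have hic : ∀ n : ℕ, ∏ x ∈ Icc 1 n, x = n.factorial := by
      intro n
      induction n with
      | zero => simp
      | succ n ih =>
        rw [Finset.prod_Icc_succ_top (by omega), ih, Nat.factorial_succ, mul_comm]
    rw [show (((p - 1).factorial : ℤ)) = ∏ a ∈ Icc 1 (p - 1), (a : ℤ) by
      rw [← Nat.cast_prod, hic], ← Finset.prod_pow]
    exact Finset.prod_congr rfl fun a ha => by rw [hq a ha]; ring
  have heven : Even (p - 1) := Nat.Odd.sub_odd hodd odd_one
  have h5 : ((p - 1).factorial : ℤ) ^ (p - 1) ≡ 1 + (p : ℤ) * W [ZMOD (p : ℤ) ^ 2] := by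
    have hfac : ((p - 1).factorial : ℤ) = (p : ℤ) * W - 1 := by linarith
    rw [hfac]
    have := (pow_sub_one_congr ((p : ℤ) * W) (p - 1)).of_dvd
      (show (p : ℤ) ^ 2 ∣ ((p : ℤ) * W) ^ 2 from ⟨W ^ 2, by ring⟩)
    refine this.trans ?_
    rw [heven.neg_one_pow, one_mul]
    have hcast : ((p - 1 : ℕ) : ℤ) = (p : ℤ) - 1 := by
      have : 1 ≤ p := hp.one_lt.le
      push_cast [Nat.cast_sub this]; ring
    rw [hcast]
    exact Int.modEq_iff_dvd.mpr ⟨W, by ring⟩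
  -- combine
  have hfinal : (1 : ℤ) + (p : ℤ) * S ≡ 1 + (p : ℤ) * W [ZMOD (p : ℤ) ^ 2] :=
    (h1.symm.trans (h2 ▸ Int.ModEq.refl _)).trans h5
  have hdvd : (p : ℤ) ^ 2 ∣ (p : ℤ) * (W - S) := by
    have := Int.modEq_iff_dvd.mp hfinal
    convert this using 1
    ring
  rw [sq] at hdvd
  exact dvd_sub_comm.mp ((mul_dvd_mul_iff_left hp0).mp hdvd)
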